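/- Let α ∈ (0,1), c > 0, ε > 0, T > 0, let x₁ ≤ x₂ be real numbers, and let g₁, g₂ : [0,T] → ℝ be bounded measurable functions with g₁(t) ≤ g₂(t) for all t ∈ [0,T]. Suppose y₁, y₂ : [0,T] → ℝ are bounded measurable functions such that y₁(t) ≥ ε for all t ∈ [0,T], y₁(t) ≤ x₁ + c ∫₀ᵗ y₁(s)^α ds + g₁(t) for all t ∈ [0,T], and y₂(t) ≥ x₂ + c ∫₀ᵗ |y₂(s)|^α ds + g₂(t) for all t ∈ [0,T]. Then y₁(t) ≤ y₂(t) for all t ∈ [0,T]. -/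
import Mathlib


open Set intervalIntegral

private lemma key_pt (α ε M L : ℝ) (hα : α ∈ Set.Ioo (0:ℝ) 1) (hε : 0 < ε) (hM : ε ≤ M)
    (hL1 : α * (ε/2) ^ (α - 1) ≤ L) (hL2 : 2 * M ^ α / ε ≤ L)
    (a b : ℝ) (ha : ε ≤ a) (haM : a ≤ M) :
    a ^ α - |b| ^ α ≤ L * max (a - b) 0 := by
  obtain ⟨hα0, hα1⟩ := hα
  have ha0 : (0:ℝ) < a := hε.trans_le ha
  have hM0 : (0:ℝ) < M ^ α := Real.rpow_pos_of_pos (hε.trans_le hM) α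
  have hL0 : (0:ℝ) < L := lt_of_lt_of_le (by positivity) hL2
  rcases le_or_gt a b with h | h
  · have hab : a ^ α ≤ |b| ^ α :=
      Real.rpow_le_rpow ha0.le (h.trans (le_abs_self b)) hα0.le
    have : (0:ℝ) ≤ L * max (a - b) 0 :=
      mul_nonneg hL0.le (le_max_right _ _)
    linarith
  · have hmax : max (a - b) 0 = a - b := max_eq_left (by linarith)
    rw [hmax]
    rcases le_or_gt (ε/2) b with hb | hb
    · -- mean value theorem case
      have hb0 : (0:ℝ) < b := lt_of_lt_of_le (by linarith) hb
      have hcont : ContinuousOn (fun x : ℝ => x ^ α) (Icc b a) := fun x hx =>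
        (Real.continuousAt_rpow_const x α (Or.inr hα0.le)).continuousWithinAt
      obtain ⟨ξ, hξ, hslope⟩ := exists_hasDerivAt_eq_slope (fun x : ℝ => x ^ α)
        (fun x => α * x ^ (α - 1)) h hcont
        (fun x hx => Real.hasDerivAt_rpow_const (Or.inl (ne_of_gt (hb0.trans hx.1))))
      have hξ0 : ε/2 ≤ ξ := hb.trans hξ.1.le
      have hξle : ξ ^ (α - 1) ≤ (ε/2) ^ (α - 1) :=
        Real.rpow_le_rpow_of_nonpos (by linarith) hξ0 (by linarith)
      have habs : |b| = b := abs_of_pos hb0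
      have heq : a ^ α - b ^ α = α * ξ ^ (α - 1) * (a - b) := by
        rw [eq_div_iff (by linarith : a - b ≠ 0)] at hslope
        linarith [hslope]
      rw [habs, heq]
      have h1 : α * ξ ^ (α - 1) ≤ L := le_trans
        (mul_le_mul_of_nonneg_left hξle hα0.le) hL1
      exact mul_le_mul_of_nonneg_right h1 (by linarith)
    · -- a - b > ε/2 case
      have h1 : a ^ α - |b| ^ α ≤ a ^ α := by
        have : (0:ℝ) ≤ |b| ^ α := Real.rpow_nonneg (abs_nonneg b) α
        linarith
      have h2 : a ^ α ≤ M ^ α := Real.rpow_le_rpow ha0.le haM hα0.le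
      have h3 : ε/2 ≤ a - b := by linarith
      calc a ^ α - |b| ^ α ≤ M ^ α := h1.trans h2
        _ = (2 * M ^ α / ε) * (ε/2) := by field_simp
        _ ≤ L * (ε/2) := mul_le_mul_of_nonneg_right hL2 (by linarith)
        _ ≤ L * (a - b) := mul_le_mul_of_nonneg_left h3 hL0.le

private lemma intInt_of_bdd {f : ℝ → ℝ} {T t C : ℝ} (hfm : Measurable f)
    (ht : t ∈ Icc (0:ℝ) T) (hC : ∀ s ∈ Icc (0:ℝ) T, |f s| ≤ C) :
    IntervalIntegrable f MeasureTheory.volume 0 t := by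
  rw [intervalIntegrable_iff_integrableOn_Icc_of_le ht.1]
  apply MeasureTheory.Measure.integrableOn_of_bounded (M := C)
    measure_Icc_lt_top.ne hfm.aestronglyMeasurable
  filter_upwards [MeasureTheory.ae_restrict_mem measurableSet_Icc] with s hs
  rw [Real.norm_eq_abs]
  exact hC s ⟨hs.1, hs.2.trans ht.2⟩

private lemma gronwall_zero (K B T : ℝ) (hK : 0 ≤ K) (hB : 0 ≤ B) (hT : 0 < T)
    (f : ℝ → ℝ) (hfm : Measurable f) (hf0 : ∀ t ∈ Icc (0:ℝ) T, 0 ≤ f t)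
    (hfB : ∀ t ∈ Icc (0:ℝ) T, f t ≤ B)
    (hf : ∀ t ∈ Icc (0:ℝ) T, f t ≤ K * ∫ s in (0:ℝ)..t, f s) :
    ∀ t ∈ Icc (0:ℝ) T, f t ≤ 0 := by
  have habs : ∀ s ∈ Icc (0:ℝ) T, |f s| ≤ B := fun s hs =>
    abs_le.2 ⟨by linarith [hf0 s hs, hB], hfB s hs⟩
  have hint : ∀ t ∈ Icc (0:ℝ) T, IntervalIntegrable f MeasureTheory.volume 0 t :=
    fun t ht => intInt_of_bdd hfm ht habs
  have claim : ∀ n : ℕ, ∀ t ∈ Icc (0:ℝ) T, f t ≤ B * (K * t) ^ n / n.factorial := by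
    intro n
    induction n with
    | zero => simpa using hfB
    | succ n ih =>
      intro t ht
      have h2 : (∫ s in (0:ℝ)..t, f s) ≤
          ∫ s in (0:ℝ)..t, (B * K ^ n / n.factorial) * s ^ n := by
        apply intervalIntegral.integral_mono_on ht.1 (hint t ht)
          ((continuous_const.mul (continuous_pow n)).intervalIntegrable 0 t)
        intro s hs
        have := ih s ⟨hs.1, hs.2.trans ht.2⟩
        calc f s ≤ B * (K * s) ^ n / n.factorial := this
          _ = (B * K ^ n / n.factorial) * s ^ n := by rw [mul_pow]; ring
      have h3 : (∫ s in (0:ℝ)..t, (B * K ^ n / n.factorial) * s ^ n)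
          = (B * K ^ n / n.factorial) * (t ^ (n+1) / (n+1)) := by
        rw [intervalIntegral.integral_const_mul, integral_pow]
        norm_num
      have h4 := hf t ht
      have h5 : K * (∫ s in (0:ℝ)..t, f s) ≤
          K * ((B * K ^ n / n.factorial) * (t ^ (n+1) / (n+1))) := by
        apply mul_le_mul_of_nonneg_left _ hK
        rw [← h3]; exact h2
      have hfact : (0:ℝ) < n.factorial := by positivity
      have heq : K * ((B * K ^ n / n.factorial) * (t ^ (n+1) / (n+1)))
          = B * (K * t) ^ (n+1) / (n+1).factorial := by
        rw [Nat.factorial_succ, mul_pow]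
        push_cast
        field_simp
        try ring
      rw [heq] at h5
      linarith [h4, h5]
  intro t ht
  have hKt : 0 ≤ K * t := mul_nonneg hK ht.1
  have hKT : K * t ≤ K * T := mul_le_mul_of_nonneg_left ht.2 hK
  have hbound : ∀ n : ℕ, f t ≤ B * (K * T) ^ n / n.factorial := by
    intro n
    refine (claim n t ht).trans ?_
    gcongr
  have htend : Filter.Tendsto (fun n : ℕ => B * (K * T) ^ n / n.factorial)
      Filter.atTop (nhds 0) := by
    have := FloorSemiring.tendsto_pow_div_factorial_atTop (K := ℝ) (K * T)
    have h := this.const_mul B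
    simpa [mul_div_assoc] using h
  exact ge_of_tendsto htend (Filter.Eventually.of_forall hbound)

/-- Comparison principle between a subsolution bounded away from `0` and a
supersolution of `y(t) = x + c ∫₀ᵗ |y(s)|^α ds + g(t)`, `α ∈ (0,1)`. -/
theorem stmt1 (α c ε T x₁ x₂ : ℝ) (hα : α ∈ Set.Ioo (0:ℝ) 1) (hc : 0 < c)
    (hε : 0 < ε) (hT : 0 < T) (hx : x₁ ≤ x₂)
    (g₁ g₂ y₁ y₂ : ℝ → ℝ)
    (hg₁meas : Measurable g₁) (hg₂meas : Measurable g₂)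
    (hg₁bdd : ∃ M : ℝ, ∀ t ∈ Icc (0:ℝ) T, |g₁ t| ≤ M)
    (hg₂bdd : ∃ M : ℝ, ∀ t ∈ Icc (0:ℝ) T, |g₂ t| ≤ M)
    (hy₁meas : Measurable y₁) (hy₂meas : Measurable y₂)
    (hy₁bdd : ∃ M : ℝ, ∀ t ∈ Icc (0:ℝ) T, |y₁ t| ≤ M)
    (hy₂bdd : ∃ M : ℝ, ∀ t ∈ Icc (0:ℝ) T, |y₂ t| ≤ M)
    (hg : ∀ t ∈ Icc (0:ℝ) T, g₁ t ≤ g₂ t)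
    (hy₁pos : ∀ t ∈ Icc (0:ℝ) T, ε ≤ y₁ t)
    (hy₁sub : ∀ t ∈ Icc (0:ℝ) T, y₁ t ≤ x₁ + c * (∫ s in (0:ℝ)..t, y₁ s ^ α) + g₁ t)
    (hy₂sup : ∀ t ∈ Icc (0:ℝ) T, x₂ + c * (∫ s in (0:ℝ)..t, |y₂ s| ^ α) + g₂ t ≤ y₂ t) :
    ∀ t ∈ Icc (0:ℝ) T, y₁ t ≤ y₂ t := by
  obtain ⟨hα0, hα1⟩ := hα
  obtain ⟨M₁', hM₁'⟩ := hy₁bdd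
  obtain ⟨M₂, hM₂⟩ := hy₂bdd
  -- bounds
  set M : ℝ := max M₁' ε with hMdef
  have hM : ε ≤ M := le_max_right _ _
  have hM0 : (0:ℝ) < M := hε.trans_le hM
  have hy₁le : ∀ t ∈ Icc (0:ℝ) T, y₁ t ≤ M := fun t ht =>
    ((le_abs_self _).trans (hM₁' t ht)).trans (le_max_left _ _)
  have hM₂0 : (0:ℝ) ≤ M₂ := le_trans (abs_nonneg _) (hM₂ 0 ⟨le_refl _, hT.le⟩)
  set L : ℝ := max (α * (ε/2) ^ (α - 1)) (2 * M ^ α / ε) with hLdef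
  have hMα : (0:ℝ) < M ^ α := Real.rpow_pos_of_pos hM0 α
  have hL0 : (0:ℝ) < L := lt_of_lt_of_le (by positivity) (le_max_right _ _)
  set K : ℝ := c * L with hKdef
  have hK0 : (0:ℝ) ≤ K := mul_nonneg hc.le hL0.le
  set f : ℝ → ℝ := fun t => max (y₁ t - y₂ t) 0 with hfdef
  have hfm : Measurable f := (hy₁meas.sub hy₂meas).max measurable_const
  set B : ℝ := M + M₂ with hBdef
  have hB0 : (0:ℝ) ≤ B := by positivity
  have hf0 : ∀ t ∈ Icc (0:ℝ) T, 0 ≤ f t := fun t ht => le_max_right _ _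
  have hfB : ∀ t ∈ Icc (0:ℝ) T, f t ≤ B := by
    intro t ht
    have h1 : y₁ t ≤ M := hy₁le t ht
    have h2 : -M₂ ≤ y₂ t := neg_le_of_abs_le (hM₂ t ht)
    exact max_le (by simp only [hBdef]; linarith) (by positivity)
  -- integrability of the rpow functions
  have hmeas1 : Measurable fun s => y₁ s ^ α :=
    (Real.continuous_rpow_const hα0.le).measurable.comp hy₁meas
  have hmeas2 : Measurable fun s => |y₂ s| ^ α :=
    (Real.continuous_rpow_const hα0.le).measurable.comp hy₂meas.abs
  have hbdd1 : ∀ s ∈ Icc (0:ℝ) T, |y₁ s ^ α| ≤ M ^ α := by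
    intro s hs
    rw [abs_of_nonneg (Real.rpow_nonneg (le_trans hε.le (hy₁pos s hs)) α)]
    exact Real.rpow_le_rpow (le_trans hε.le (hy₁pos s hs)) (hy₁le s hs) hα0.le
  have hbdd2 : ∀ s ∈ Icc (0:ℝ) T, abs (|y₂ s| ^ α) ≤ M₂ ^ α := by
    intro s hs
    rw [abs_of_nonneg (Real.rpow_nonneg (abs_nonneg _) α)]
    exact Real.rpow_le_rpow (abs_nonneg _) (hM₂ s hs) hα0.le
  -- key growth inequality for f
  have hf : ∀ t ∈ Icc (0:ℝ) T, f t ≤ K * ∫ s in (0:ℝ)..t, f s := by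
    intro t ht
    have hI1 : IntervalIntegrable (fun s => y₁ s ^ α) MeasureTheory.volume 0 t :=
      intInt_of_bdd hmeas1 ht hbdd1
    have hI2 : IntervalIntegrable (fun s => |y₂ s| ^ α) MeasureTheory.volume 0 t :=
      intInt_of_bdd hmeas2 ht hbdd2
    have hIf : IntervalIntegrable f MeasureTheory.volume 0 t :=
      intInt_of_bdd hfm ht (fun s hs => abs_le.2 ⟨by linarith [hf0 s hs], hfB s hs⟩)
    have hmono : (∫ s in (0:ℝ)..t, (y₁ s ^ α - |y₂ s| ^ α)) ≤
        ∫ s in (0:ℝ)..t, L * f s := by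
      apply intervalIntegral.integral_mono_on ht.1 (hI1.sub hI2) (hIf.const_mul L)
      intro s hs
      have hsT : s ∈ Icc (0:ℝ) T := ⟨hs.1, hs.2.trans ht.2⟩
      exact key_pt α ε M L ⟨hα0, hα1⟩ hε hM (le_max_left _ _) (le_max_right _ _)
        (y₁ s) (y₂ s) (hy₁pos s hsT) (hy₁le s hsT)
    have hsplit : (∫ s in (0:ℝ)..t, (y₁ s ^ α - |y₂ s| ^ α)) =
        (∫ s in (0:ℝ)..t, y₁ s ^ α) - ∫ s in (0:ℝ)..t, |y₂ s| ^ α :=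
      intervalIntegral.integral_sub hI1 hI2
    have hconst : (∫ s in (0:ℝ)..t, L * f s) = L * ∫ s in (0:ℝ)..t, f s :=
      intervalIntegral.integral_const_mul L f
    have hsub := hy₁sub t ht
    have hsup := hy₂sup t ht
    have hgt := hg t ht
    have hdiff : y₁ t - y₂ t ≤ K * ∫ s in (0:ℝ)..t, f s := by
      have h1 : y₁ t - y₂ t ≤
          c * ((∫ s in (0:ℝ)..t, y₁ s ^ α) - ∫ s in (0:ℝ)..t, |y₂ s| ^ α) := by
        nlinarith [hsub, hsup, hgt, hx]
      calc y₁ t - y₂ t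
          ≤ c * ((∫ s in (0:ℝ)..t, y₁ s ^ α) - ∫ s in (0:ℝ)..t, |y₂ s| ^ α) := h1
        _ = c * (∫ s in (0:ℝ)..t, (y₁ s ^ α - |y₂ s| ^ α)) := by rw [hsplit]
        _ ≤ c * (∫ s in (0:ℝ)..t, L * f s) :=
            mul_le_mul_of_nonneg_left hmono hc.le
        _ = K * ∫ s in (0:ℝ)..t, f s := by rw [hconst, hKdef]; ring
    have hintnn : (0:ℝ) ≤ ∫ s in (0:ℝ)..t, f s :=
      intervalIntegral.integral_nonneg ht.1 (fun s hs => le_max_right _ _)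
    exact max_le hdiff (mul_nonneg hK0 hintnn)
  have hfin := gronwall_zero K B T hK0 hB0 hT f hfm hf0 hfB hf
  intro t ht
  have h1 := hfin t ht
  have h2 : y₁ t - y₂ t ≤ f t := le_max_left _ _
  linarith
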